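/- Under the setting of the auxiliary function (x ∈ ℝ_{≥0}^n, q(α) = max(x − α·e, 0), ℓ₁ = ‖q‖₁, ℓ₂ = ‖q‖₂, Ψ = ℓ₁/ℓ₂ − λ₁/λ₂), on any open interval (x_j, x_k) between consecutive distinct entries of x, Ψ is differentiable with derivative Ψ'(α) = (1/ℓ₂(α)) · (ℓ₁(α)²/ℓ₂(α)² − d), where d is the (constant) number of indices i with x_i > α. -/

import Mathlib

noncomputable def l1 {n : ℕ} (x : Fin n → ℝ) : ℝ := ∑ i, |x i|
noncomputable def l2 {n : ℕ} (x : Fin n → ℝ) : ℝ := Real.sqrt (∑ i, (x i) ^ 2)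
noncomputable def Psi {n : ℕ} (x : Fin n → ℝ) (lam1 lam2 α : ℝ) : ℝ :=
  l1 (fun i => max (x i - α) 0) / l2 (fun i => max (x i - α) 0) - lam1 / lam2

theorem stmt_7 {n : ℕ} (x : Fin n → ℝ) (hx : ∀ i, 0 ≤ x i)
    (lam1 lam2 : ℝ) (h0 : 0 < lam2) (h1 : 0 < lam1)
    (xj xk : ℝ) (hjk : xj < xk)
    (hj : xj = 0 ∨ ∃ i, x i = xj) (hk : ∃ i, x i = xk)
    (hgap : ∀ i, ¬ (xj < x i ∧ x i < xk))
    (hbelow : ∃ i, xk < x i)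
    (d : ℕ) (hd : d = (Finset.univ.filter (fun i => xk ≤ x i)).card) :
    ∀ α ∈ Set.Ioo xj xk,
      HasDerivAt (Psi x lam1 lam2)
        ((1 / l2 (fun i => max (x i - α) 0)) *
          ((l1 (fun i => max (x i - α) 0)) ^ 2 / (l2 (fun i => max (x i - α) 0)) ^ 2 - d)) α := by
  intro α hα
  obtain ⟨hja, hak⟩ := hα
  set S : Finset (Fin n) := Finset.univ.filter (fun i => xk ≤ x i) with hS
  have hSmem : ∀ i, i ∈ S ↔ xk ≤ x i := by
    intro i; simp [hS]
  have hSne : S.Nonempty := by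
    obtain ⟨i, hi⟩ := hbelow
    exact ⟨i, (hSmem i).2 hi.le⟩
  have hout : ∀ i, i ∉ S → x i ≤ xj := by
    intro i hi
    have hik : x i < xk := by
      by_contra h; exact hi ((hSmem i).2 (not_lt.1 h))
    by_contra h
    exact hgap i ⟨not_le.1 h, hik⟩
  -- key rewriting of l1 and l2 on the interval
  have key1 : ∀ β ∈ Set.Ioo xj xk, (∑ i, |max (x i - β) 0|) = ∑ i ∈ S, (x i - β) := by
    intro β hβ
    rw [← Finset.sum_filter_add_sum_filter_not Finset.univ (fun i => xk ≤ x i)]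
    have h2 : ∑ i ∈ Finset.univ.filter (fun i => ¬ xk ≤ x i), |max (x i - β) 0| = 0 := by
      apply Finset.sum_eq_zero
      intro i hi
      have : i ∉ S := by
        simp only [Finset.mem_filter] at hi
        intro hc; exact hi.2 ((hSmem i).1 hc)
      have hxi : x i ≤ xj := hout i this
      have : x i - β ≤ 0 := by linarith [hβ.1]
      rw [max_eq_right this]; simp
    rw [h2, add_zero]
    apply Finset.sum_congr rfl
    intro i hi
    have hxi : xk ≤ x i := (hSmem i).1 (by simpa [hS] using hi)
    have : 0 ≤ x i - β := by linarith [hβ.2]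
    rw [max_eq_left this, abs_of_nonneg this]
  have key2 : ∀ β ∈ Set.Ioo xj xk, (∑ i, (max (x i - β) 0) ^ 2) = ∑ i ∈ S, (x i - β) ^ 2 := by
    intro β hβ
    rw [← Finset.sum_filter_add_sum_filter_not Finset.univ (fun i => xk ≤ x i)]
    have h2 : ∑ i ∈ Finset.univ.filter (fun i => ¬ xk ≤ x i), (max (x i - β) 0) ^ 2 = 0 := by
      apply Finset.sum_eq_zero
      intro i hi
      have : i ∉ S := by
        simp only [Finset.mem_filter] at hi
        intro hc; exact hi.2 ((hSmem i).1 hc)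
      have hxi : x i ≤ xj := hout i this
      have : x i - β ≤ 0 := by linarith [hβ.1]
      rw [max_eq_right this]; simp
    rw [h2, add_zero]
    apply Finset.sum_congr rfl
    intro i hi
    have hxi : xk ≤ x i := (hSmem i).1 (by simpa [hS] using hi)
    have : 0 ≤ x i - β := by linarith [hβ.2]
    rw [max_eq_left this]
  have hαIoo : α ∈ Set.Ioo xj xk := ⟨hja, hak⟩
  -- positivity of the sum of squares at α
  have hBpos : 0 < ∑ i ∈ S, (x i - α) ^ 2 := by
    apply Finset.sum_pos
    · intro i hi
      have hxi : xk ≤ x i := (hSmem i).1 hi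
      have : 0 < x i - α := by linarith
      positivity
    · exact hSne
  set A : ℝ := ∑ i ∈ S, (x i - α) with hA
  set L : ℝ := Real.sqrt (∑ i ∈ S, (x i - α) ^ 2) with hL
  have hLpos : 0 < L := Real.sqrt_pos.2 hBpos
  have hLne : L ≠ 0 := ne_of_gt hLpos
  -- derivative of the explicit function
  have hAder : HasDerivAt (fun β => ∑ i ∈ S, (x i - β)) (-(d : ℝ)) α := by
    have : HasDerivAt (fun β => ∑ i ∈ S, (x i - β)) (∑ _i ∈ S, (-1 : ℝ)) α := by
      apply HasDerivAt.fun_sum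
      intro i _
      simpa using (hasDerivAt_id α).const_sub (x i)
    simpa [hd, hS, mul_comm] using this
  have hBder : HasDerivAt (fun β => ∑ i ∈ S, (x i - β) ^ 2) (∑ i ∈ S, (2 * (x i - α) * (-1))) α := by
    apply HasDerivAt.fun_sum
    intro i _
    have h1 : HasDerivAt (fun β => x i - β) (-1 : ℝ) α := by
      simpa using (hasDerivAt_id α).const_sub (x i)
    simpa [mul_comm] using h1.fun_pow 2
  have hBder' : HasDerivAt (fun β => ∑ i ∈ S, (x i - β) ^ 2) (-2 * A) α := by
    convert hBder using 1
    rw [hA, Finset.mul_sum]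
    apply Finset.sum_congr rfl
    intro i _; ring
  have hLder : HasDerivAt (fun β => Real.sqrt (∑ i ∈ S, (x i - β) ^ 2)) ((-2 * A) / (2 * L)) α :=
    hBder'.sqrt (ne_of_gt hBpos)
  have hFder : HasDerivAt
      (fun β => (∑ i ∈ S, (x i - β)) / Real.sqrt (∑ i ∈ S, (x i - β) ^ 2) - lam1 / lam2)
      ((-(d : ℝ) * L - A * ((-2 * A) / (2 * L))) / L ^ 2) α :=
    (hAder.div hLder hLne).sub_const _
  -- Psi agrees with the explicit function near α
  have hev : Psi x lam1 lam2 =ᶠ[nhds α]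
      (fun β => (∑ i ∈ S, (x i - β)) / Real.sqrt (∑ i ∈ S, (x i - β) ^ 2) - lam1 / lam2) := by
    filter_upwards [Ioo_mem_nhds hja hak] with β hβ
    simp only [Psi, l1, l2]
    rw [key1 β hβ, key2 β hβ]
  have hfinal := hFder.congr_of_eventuallyEq hev
  refine hfinal.congr_deriv ?_
  have e1 : l1 (fun i => max (x i - α) 0) = A := by
    simp only [l1]; rw [hA]; exact key1 α hαIoo
  have e2 : l2 (fun i => max (x i - α) 0) = L := by
    simp only [l2]; rw [hL, key2 α hαIoo]
  rw [e1, e2]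
  field_simp
  ring
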